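/- For any 0 < λ < 1/3 and n large enough, there exists a sequence (a_1,…,a_n) of positive integers with a_i ≤ λ^3 n^2 · 2^{f(λ)n} for all i, such that for all distinct subsets A_1, A_2 of {1,…,n} with |A_1| ≤ λn and |A_2| ≤ λn, ∑_{i∈A_1} a_i ≠ ∑_{j∈A_2} a_j. -/

import Mathlib

open Finset

lemma binom_term_le (x y : ℝ) (hx : 0 ≤ x) (hy : 0 ≤ y) {m j : ℕ} (hj : j ≤ m) :
    (m.choose j : ℝ) * (x ^ j * y ^ (m - j)) ≤ (x + y) ^ m := by
  rw [add_pow]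
  calc (m.choose j : ℝ) * (x ^ j * y ^ (m - j))
      = x ^ j * y ^ (m - j) * (m.choose j : ℝ) := by ring
    _ ≤ ∑ i ∈ Finset.range (m + 1), x ^ i * y ^ (m - i) * (m.choose i : ℝ) :=
        Finset.single_le_sum (f := fun i => x ^ i * y ^ (m - i) * (m.choose i : ℝ))
          (fun i _ => by positivity)
          (Finset.mem_range.2 (Nat.lt_succ_of_le hj))

lemma trinom_le (x y : ℝ) (hx : 0 ≤ x) (hy : 0 ≤ y) {n k l : ℕ} (hkl : k + l ≤ n) :
    (n.choose k : ℝ) * ((n - k).choose l : ℝ) * (x ^ (k + l) * y ^ (n - k - l))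
      ≤ (x + (x + y)) ^ n := by
  have hk : k ≤ n := le_trans (Nat.le_add_right _ _) hkl
  have hl : l ≤ n - k := Nat.le_sub_of_add_le (by omega)
  have h1 : ((n - k).choose l : ℝ) * (x ^ l * y ^ (n - k - l)) ≤ (x + y) ^ (n - k) :=
    binom_term_le x y hx hy hl
  have h2 : (n.choose k : ℝ) * (x ^ k * (x + y) ^ (n - k)) ≤ (x + (x + y)) ^ n :=
    binom_term_le x (x + y) hx (by positivity) hk
  calc (n.choose k : ℝ) * ((n - k).choose l : ℝ) * (x ^ (k + l) * y ^ (n - k - l))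
      = (n.choose k : ℝ) * (x ^ k * (((n - k).choose l : ℝ) * (x ^ l * y ^ (n - k - l)))) := by
        rw [pow_add]; ring
    _ ≤ (n.choose k : ℝ) * (x ^ k * (x + y) ^ (n - k)) := by
        apply mul_le_mul_of_nonneg_left _ (Nat.cast_nonneg _)
        exact mul_le_mul_of_nonneg_left h1 (by positivity)
    _ ≤ (x + (x + y)) ^ n := h2

lemma choose_bound {lam mu : ℝ} (h0 : 0 < lam) (hmu : 0 < mu) (hsum : lam + (lam + mu) = 1)
    (n k l : ℕ) :
    ((n.choose k * ((n - k).choose l) : ℕ) : ℝ) ≤ mu⁻¹ ^ n * (mu / lam) ^ (k + l) := by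
  by_cases hkl : k + l ≤ n
  · have key := trinom_le lam mu h0.le hmu.le hkl
    rw [hsum, one_pow] at key
    have hD : (0:ℝ) < lam ^ (k + l) * mu ^ (n - k - l) := by positivity
    have gen : ∀ m : ℕ, mu⁻¹ ^ ((k + l) + m) * (mu / lam) ^ (k + l)
        * (lam ^ (k + l) * mu ^ m) = 1 := by
      intro m
      rw [pow_add, div_pow, inv_pow, inv_pow]
      field_simp
    have hmul : mu⁻¹ ^ n * (mu / lam) ^ (k + l) * (lam ^ (k + l) * mu ^ (n - k - l)) = 1 := by
      have := gen (n - k - l)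
      rwa [show (k + l) + (n - k - l) = n by omega] at this
    have hcast : ((n.choose k * ((n - k).choose l) : ℕ) : ℝ)
        = (n.choose k : ℝ) * ((n - k).choose l : ℝ) := by push_cast; ring
    rw [hcast, show mu⁻¹ ^ n * (mu / lam) ^ (k + l) = 1 / (lam ^ (k + l) * mu ^ (n - k - l)) from
      by rw [eq_div_iff hD.ne']; exact hmul]
    exact (le_div_iff₀ hD).2 key
  · have hz : n.choose k * ((n - k).choose l) = 0 := by
      rcases Nat.lt_or_ge n k with h | h
      · rw [Nat.choose_eq_zero_of_lt h, zero_mul]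
      · rw [Nat.choose_eq_zero_of_lt (show n - k < l by omega), mul_zero]
    rw [hz]
    push_cast
    positivity

lemma count_pairs (s : Finset ℕ) (K : ℕ) :
    (((s.powerset ×ˢ s.powerset).filter fun p : Finset ℕ × Finset ℕ =>
        Disjoint p.1 p.2 ∧ p.1 ≠ p.2 ∧ p.1.card ≤ K ∧ p.2.card ≤ K).card)
      ≤ ∑ k ∈ Finset.range (K+1), ∑ l ∈ Finset.range (K+1),
          s.card.choose k * (s.card - k).choose l := by
  classical
  set P := ((s.powerset ×ˢ s.powerset).filter fun p : Finset ℕ × Finset ℕ =>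
        Disjoint p.1 p.2 ∧ p.1 ≠ p.2 ∧ p.1.card ≤ K ∧ p.2.card ≤ K) with hP
  have h1 : P.card = ∑ q ∈ (Finset.range (K+1)) ×ˢ (Finset.range (K+1)),
      (P.filter fun p => (p.1.card, p.2.card) = q).card := by
    apply Finset.card_eq_sum_card_fiberwise
    intro p hp
    simp only [hP, Finset.mem_coe, mem_filter] at hp
    simp only [Finset.mem_coe, mem_product, mem_range]
    exact ⟨Nat.lt_succ_of_le hp.2.2.2.1, Nat.lt_succ_of_le hp.2.2.2.2⟩
  rw [h1, Finset.sum_product]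
  refine Finset.sum_le_sum fun k _ => Finset.sum_le_sum fun l _ => ?_
  calc (P.filter fun p => (p.1.card, p.2.card) = (k, l)).card
      ≤ ((s.powersetCard k).biUnion fun B =>
          ((s \ B).powersetCard l).map ⟨fun C => (B, C), fun _ _ h => (Prod.mk.injEq _ _ _ _ ▸ congrArg id h : _ ∧ _).2⟩).card := by
        apply Finset.card_le_card
        intro p hp
        simp only [hP, mem_filter, mem_product, Prod.mk.injEq] at hp
        obtain ⟨⟨⟨hp1, hp2⟩, hd, _, _, _⟩, hk, hl⟩ := hp
        rw [Finset.mem_biUnion]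
        refine ⟨p.1, Finset.mem_powersetCard.2 ⟨Finset.mem_powerset.1 hp1, hk⟩, ?_⟩
        rw [Finset.mem_map]
        refine ⟨p.2, Finset.mem_powersetCard.2 ⟨Finset.subset_sdiff.2 ⟨Finset.mem_powerset.1 hp2, hd.symm⟩, hl⟩, rfl⟩
    _ ≤ ∑ B ∈ s.powersetCard k, (((s \ B).powersetCard l).map _).card := Finset.card_biUnion_le
    _ = ∑ _B ∈ s.powersetCard k, (s.card - k).choose l := by
        apply Finset.sum_congr rfl
        intro B hB
        rw [Finset.card_map, Finset.card_powersetCard,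
          Finset.card_sdiff_of_subset (Finset.mem_powersetCard.1 hB).1, (Finset.mem_powersetCard.1 hB).2]
    _ = s.card.choose k * (s.card - k).choose l := by
        rw [Finset.sum_const, Finset.card_powersetCard, smul_eq_mul]

lemma event_card {M : ℕ} {s : Finset ℕ} {B₁ B₂ : Finset ℕ} (h1 : B₁ ⊆ s) (_h2 : B₂ ⊆ s)
    {i₀ : ℕ} (hi₁ : i₀ ∈ B₁) (hi₂ : i₀ ∉ B₂) :
    (Finset.univ.filter fun f : {x // x ∈ s} → Fin M =>
       (∑ i ∈ B₁, (if h : i ∈ s then (f ⟨i, h⟩ : ℕ) + 1 else 1)) =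
       (∑ i ∈ B₂, (if h : i ∈ s then (f ⟨i, h⟩ : ℕ) + 1 else 1))).card ≤ M ^ (s.card - 1) := by
  classical
  set val : ({x // x ∈ s} → Fin M) → ℕ → ℕ :=
    fun f i => if h : i ∈ s then (f ⟨i, h⟩ : ℕ) + 1 else 1 with hval
  set i₀' : {x // x ∈ s} := ⟨i₀, h1 hi₁⟩ with hi₀'
  have key : (Finset.univ.filter fun f : {x // x ∈ s} → Fin M =>
       (∑ i ∈ B₁, val f i) = (∑ i ∈ B₂, val f i)).card
      ≤ (Finset.univ : Finset ({j : {x // x ∈ s} // j ≠ i₀'} → Fin M)).card := by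
    apply Finset.card_le_card_of_injOn (fun f => fun j => f j.1) (fun _ _ => mem_univ _)
    intro f hf g hg hfg
    simp only [coe_filter, Set.mem_setOf_eq] at hf hg
    have hoff : ∀ i : ℕ, i ≠ i₀ → val f i = val g i := by
      intro i hi
      by_cases h : i ∈ s
      · have hne : (⟨i, h⟩ : {x // x ∈ s}) ≠ i₀' := by
          simp only [hi₀', ne_eq, Subtype.mk.injEq]; exact hi
        have := congrFun hfg ⟨⟨i, h⟩, hne⟩
        simp only [hval, dif_pos h]
        exact congrArg (fun z : Fin M => (z : ℕ) + 1) this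
      · simp [hval, dif_neg h]
    have e2 : ∑ i ∈ B₂, val f i = ∑ i ∈ B₂, val g i :=
      Finset.sum_congr rfl fun i hi => hoff i (fun e => hi₂ (e ▸ hi))
    have e1 : ∑ i ∈ B₁.erase i₀, val f i = ∑ i ∈ B₁.erase i₀, val g i :=
      Finset.sum_congr rfl fun i hi => hoff i (Finset.ne_of_mem_erase hi)
    have eq0 : val f i₀ + ∑ i ∈ B₁.erase i₀, val f i
        = val g i₀ + ∑ i ∈ B₁.erase i₀, val f i := by
      rw [Finset.add_sum_erase _ _ hi₁, hf.2, e2, ← hg.2, ← Finset.add_sum_erase _ (val g) hi₁, e1]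
    have eqi : val f i₀ = val g i₀ := Nat.add_right_cancel eq0
    have eqi' : f i₀' = g i₀' := by
      simp only [hval, dif_pos (h1 hi₁)] at eqi
      exact Fin.ext (Nat.succ_injective eqi)
    funext j
    by_cases hj : j = i₀'
    · rw [hj]; exact eqi'
    · exact congrFun hfg ⟨j, hj⟩
  calc _ ≤ _ := key
    _ = M ^ (s.card - 1) := by
      rw [Finset.card_univ, Fintype.card_fun, Fintype.card_fin]
      congr 1
      simp only [ne_eq]
      rw [Fintype.card_subtype_compl, Fintype.card_subtype_eq, Fintype.card_coe]

lemma rpow_bridge {lam : ℝ} (h0 : 0 < lam) (h3 : lam < 1/3) (n : ℕ) :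
    (1 - 2*lam)⁻¹ ^ n * ((1 - 2*lam) / lam) ^ ((2 * lam * n : ℝ))
      = (2:ℝ) ^ ((-(2 * lam * Real.logb 2 lam) - (1 - 2*lam) * Real.logb 2 (1 - 2*lam)) * n) := by
  have hmu : 0 < 1 - 2*lam := by linarith
  have hrho : 0 < (1 - 2*lam) / lam := by positivity
  have hlog2 : Real.log 2 ≠ 0 := (Real.log_pos (by norm_num)).ne'
  apply Real.log_injOn_pos (Set.mem_Ioi.2 (by positivity))
    (Set.mem_Ioi.2 (Real.rpow_pos_of_pos two_pos _))
  rw [Real.log_mul (by positivity) (Real.rpow_pos_of_pos hrho _).ne',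
    Real.log_pow, Real.log_rpow hrho, Real.log_rpow two_pos, Real.log_inv,
    Real.log_div hmu.ne' h0.ne', Real.logb, Real.logb]
  field_simp
  ring
/-- Combinatorial Nullstellensatz upper bound: for 0 < λ < 1/3 and n large,
there is an F_{λ,n}-sum distinct sequence of positive integers bounded by
λ³ n² 2^{f(λ)n}. -/
theorem stmt_6 (lam : ℝ) (h0 : 0 < lam) (h3 : lam < 1/3) :
    ∃ N : ℕ, ∀ n : ℕ, N ≤ n →
      ∃ a : ℕ → ℕ,
        (∀ i ∈ Finset.Icc 1 n, 0 < a i ∧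
          (a i : ℝ) ≤ lam ^ 3 * (n : ℝ) ^ 2 *
            (2 : ℝ) ^ ((-(2 * lam * Real.logb 2 lam) -
              (1 - 2 * lam) * Real.logb 2 (1 - 2 * lam)) * n)) ∧
        ∀ A₁ A₂ : Finset ℕ, A₁ ⊆ Finset.Icc 1 n → A₂ ⊆ Finset.Icc 1 n →
          (A₁.card : ℝ) ≤ lam * n → (A₂.card : ℝ) ≤ lam * n → A₁ ≠ A₂ →
          ∑ i ∈ A₁, a i ≠ ∑ j ∈ A₂, a j := by
  classical
  have hmu0 : 0 < 1 - 2 * lam := by linarith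
  have hml : lam < 1 - 2 * lam := by linarith
  set mu : ℝ := 1 - 2 * lam with hmu_def
  have hmu : 0 < mu := hmu0
  set rho : ℝ := mu / lam with hrho_def
  have hrho1 : 1 < rho := (one_lt_div h0).2 hml
  have hr1 : 0 < rho - 1 := by linarith
  have hrho0 : 0 < rho := by linarith
  set C : ℝ := rho ^ 2 / (rho - 1) ^ 2 + 1 with hC_def
  have hC0 : 0 < C := by positivity
  refine ⟨max 1 ⌈C / lam ^ 3⌉₊, fun n hn => ?_⟩
  have hn1 : 1 ≤ n := le_trans (le_max_left _ _) hn
  have hn1R : (1:ℝ) ≤ n := by exact_mod_cast hn1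
  have hCn : C ≤ lam ^ 3 * n := by
    have h1 : C / lam ^ 3 ≤ (⌈C / lam ^ 3⌉₊ : ℝ) := Nat.le_ceil _
    have h2 : ((⌈C / lam ^ 3⌉₊ : ℕ) : ℝ) ≤ n :=
      Nat.cast_le.2 (le_trans (le_max_right _ _) hn)
    calc C = C / lam ^ 3 * lam ^ 3 := by field_simp
      _ ≤ (n : ℝ) * lam ^ 3 := mul_le_mul_of_nonneg_right (h1.trans h2) (by positivity)
      _ = lam ^ 3 * n := by ring
  set E : ℝ := -(2 * lam * Real.logb 2 lam) - mu * Real.logb 2 mu with hE_def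
  have hE0 : 0 ≤ E := by
    have l1 : Real.logb 2 lam ≤ 0 :=
      Real.logb_nonpos one_lt_two h0.le (by linarith)
    have l2 : Real.logb 2 mu ≤ 0 :=
      Real.logb_nonpos one_lt_two hmu.le (by rw [hmu_def]; linarith)
    have m1 : 2 * lam * Real.logb 2 lam ≤ 0 :=
      mul_nonpos_of_nonneg_of_nonpos (by linarith) l1
    have m2 : mu * Real.logb 2 mu ≤ 0 :=
      mul_nonpos_of_nonneg_of_nonpos hmu.le l2
    rw [hE_def]; linarith
  have hE1 : 1 ≤ (2:ℝ) ^ (E * n) := by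
    rw [show (1:ℝ) = (2:ℝ) ^ (0:ℝ) from (Real.rpow_zero 2).symm]
    exact Real.rpow_le_rpow_of_exponent_le one_le_two (by positivity)
  set M : ℕ := ⌊(rho ^ 2 / (rho - 1) ^ 2) * (2:ℝ) ^ (E * n)⌋₊ + 1 with hM_def
  have hM1 : 1 ≤ M := Nat.succ_le_succ (Nat.zero_le _)
  have hMle : (M : ℝ) ≤ lam ^ 3 * (n:ℝ) ^ 2 * (2:ℝ) ^ (E * n) := by
    have hfl : (⌊(rho ^ 2 / (rho - 1) ^ 2) * (2:ℝ) ^ (E * n)⌋₊ : ℝ)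
        ≤ (rho ^ 2 / (rho - 1) ^ 2) * (2:ℝ) ^ (E * n) :=
      Nat.floor_le (by positivity)
    have h1 : (M : ℝ) ≤ (rho ^ 2 / (rho - 1) ^ 2) * (2:ℝ) ^ (E * n) + 1 := by
      rw [hM_def]; push_cast; linarith
    have h2 : (rho ^ 2 / (rho - 1) ^ 2) * (2:ℝ) ^ (E * n) + 1 ≤ C * (2:ℝ) ^ (E * n) := by
      have hexp : C * (2:ℝ) ^ (E * n)
          = (rho ^ 2 / (rho - 1) ^ 2) * (2:ℝ) ^ (E * n) + (2:ℝ) ^ (E * n) := by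
        rw [hC_def]; ring
      linarith
    have h3 : C * (2:ℝ) ^ (E * n) ≤ lam ^ 3 * (n:ℝ) ^ 2 * (2:ℝ) ^ (E * n) := by
      apply mul_le_mul_of_nonneg_right _ (by positivity)
      calc C ≤ lam ^ 3 * n := hCn
        _ ≤ lam ^ 3 * (n:ℝ) ^ 2 := by nlinarith
    exact h1.trans (h2.trans h3)
  set s : Finset ℕ := Finset.Icc 1 n with hs_def
  have hscard : s.card = n := by rw [hs_def, Nat.card_Icc]; omega
  set K : ℕ := ⌊lam * n⌋₊ with hK_def
  set P := ((s.powerset ×ˢ s.powerset).filter fun p : Finset ℕ × Finset ℕ =>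
        Disjoint p.1 p.2 ∧ p.1 ≠ p.2 ∧ p.1.card ≤ K ∧ p.2.card ≤ K) with hP_def
  have hPM : P.card < M := by
    have hcp := count_pairs s K
    rw [hscard] at hcp
    have cb : ∀ k l : ℕ, ((n.choose k : ℝ) * ((n - k).choose l : ℝ))
        ≤ mu⁻¹ ^ n * rho ^ (k + l) := by
      intro k l
      have h := choose_bound h0 hmu (by rw [hmu_def]; ring) n k l
      push_cast at h
      exact h
    set G : ℝ := ∑ k ∈ Finset.range (K+1), rho ^ k with hG_def
    have hGnn : 0 ≤ G := Finset.sum_nonneg fun k _ => by positivity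
    have hG : G ≤ rho ^ (K+1) / (rho - 1) := by
      rw [hG_def, geom_sum_eq hrho1.ne' (K+1)]
      exact div_le_div_of_nonneg_right (by linarith [pow_pos hrho0 (K+1)]) hr1.le
    have hsnat : ((∑ k ∈ Finset.range (K+1), ∑ l ∈ Finset.range (K+1),
        n.choose k * (n - k).choose l : ℕ) : ℝ)
        ≤ (rho ^ 2 / (rho - 1) ^ 2) * (2:ℝ) ^ (E * n) := by
      push_cast
      calc (∑ k ∈ Finset.range (K+1), ∑ l ∈ Finset.range (K+1),
            (n.choose k : ℝ) * ((n - k).choose l : ℝ))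
          ≤ ∑ k ∈ Finset.range (K+1), ∑ l ∈ Finset.range (K+1), mu⁻¹ ^ n * rho ^ (k + l) :=
            Finset.sum_le_sum fun k _ => Finset.sum_le_sum fun l _ => cb k l
        _ = mu⁻¹ ^ n * (G * G) := by
            rw [hG_def, Finset.sum_mul_sum, Finset.mul_sum]
            apply Finset.sum_congr rfl
            intro k _
            rw [Finset.mul_sum]
            apply Finset.sum_congr rfl
            intro l _
            rw [pow_add]
        _ ≤ mu⁻¹ ^ n * ((rho ^ (K+1) / (rho - 1)) * (rho ^ (K+1) / (rho - 1))) := by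
            apply mul_le_mul_of_nonneg_left _ (by positivity)
            exact mul_le_mul hG hG hGnn (by positivity)
        _ = (rho ^ 2 / (rho - 1) ^ 2) * (mu⁻¹ ^ n * rho ^ (2 * K)) := by
            field_simp
            ring
        _ ≤ (rho ^ 2 / (rho - 1) ^ 2) * ((2:ℝ) ^ (E * n)) := by
            apply mul_le_mul_of_nonneg_left _ (by positivity)
            have step1 : (rho:ℝ) ^ (2 * K) ≤ rho ^ ((2 * lam * n : ℝ)) := by
              rw [← Real.rpow_natCast rho (2 * K)]
              apply Real.rpow_le_rpow_of_exponent_le hrho1.le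
              have hfl : (K : ℝ) ≤ lam * n := Nat.floor_le (by positivity)
              push_cast
              linarith
            have step2 : mu⁻¹ ^ n * rho ^ ((2 * lam * n : ℝ)) = (2:ℝ) ^ (E * n) := by
              have hb := rpow_bridge h0 h3 n
              rw [hE_def, hrho_def, hmu_def]
              exact hb
            calc mu⁻¹ ^ n * rho ^ (2 * K)
                ≤ mu⁻¹ ^ n * rho ^ ((2 * lam * n : ℝ)) :=
                  mul_le_mul_of_nonneg_left step1 (by positivity)
              _ = (2:ℝ) ^ (E * n) := step2
    have hMgt : (rho ^ 2 / (rho - 1) ^ 2) * (2:ℝ) ^ (E * n) < (M:ℝ) := by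
      rw [hM_def]; push_cast; exact Nat.lt_floor_add_one _
    have hPMr : (P.card : ℝ) < (M:ℝ) := by
      have hcpR : (P.card : ℝ) ≤ _ := Nat.cast_le.2 hcp
      exact lt_of_le_of_lt (hcpR.trans hsnat) hMgt
    exact_mod_cast hPMr
  set val : ({x // x ∈ s} → Fin M) → ℕ → ℕ :=
    fun f i => if h : i ∈ s then (f ⟨i, h⟩ : ℕ) + 1 else 1 with hval_def
  set bad := (Finset.univ.filter fun f : {x // x ∈ s} → Fin M =>
      ∃ p ∈ P, ∑ i ∈ p.1, val f i = ∑ i ∈ p.2, val f i) with hbad_def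
  have hevent : ∀ p ∈ P, (Finset.univ.filter fun f : {x // x ∈ s} → Fin M =>
      ∑ i ∈ p.1, val f i = ∑ i ∈ p.2, val f i).card ≤ M ^ (n - 1) := by
    intro p hp
    rw [hP_def, Finset.mem_filter, Finset.mem_product] at hp
    obtain ⟨⟨hp1, hp2⟩, hd, hne, -, -⟩ := hp
    rw [Finset.mem_powerset] at hp1 hp2
    rw [← hscard]
    by_cases hne1 : p.1.Nonempty
    · obtain ⟨i₀, hi₀⟩ := hne1
      exact event_card hp1 hp2 hi₀ (Finset.disjoint_left.1 hd hi₀)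
    · have h1' : p.1 = ∅ := Finset.not_nonempty_iff_eq_empty.1 hne1
      have h2' : p.2.Nonempty := by
        rw [Finset.nonempty_iff_ne_empty]
        intro e
        exact hne (by rw [h1', e])
      obtain ⟨i₀, hi₀⟩ := h2'
      rw [show (Finset.univ.filter fun f : {x // x ∈ s} → Fin M =>
          ∑ i ∈ p.1, val f i = ∑ i ∈ p.2, val f i)
          = Finset.univ.filter fun f : {x // x ∈ s} → Fin M =>
            ∑ i ∈ p.2, val f i = ∑ i ∈ p.1, val f i from
        Finset.filter_congr fun f _ => eq_comm]
      exact event_card hp2 hp1 hi₀ (by rw [h1']; exact Finset.notMem_empty i₀)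
  have hbadcard : bad.card < M ^ n := by
    have hsub : bad ⊆ P.biUnion fun p => Finset.univ.filter
        fun f : {x // x ∈ s} → Fin M => ∑ i ∈ p.1, val f i = ∑ i ∈ p.2, val f i := by
      intro f hf
      rw [hbad_def, Finset.mem_filter] at hf
      obtain ⟨-, p, hp, he⟩ := hf
      exact Finset.mem_biUnion.2 ⟨p, hp, Finset.mem_filter.2 ⟨Finset.mem_univ _, he⟩⟩
    calc bad.card ≤ _ := Finset.card_le_card hsub
      _ ≤ ∑ p ∈ P, (Finset.univ.filter fun f : {x // x ∈ s} → Fin M =>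
            ∑ i ∈ p.1, val f i = ∑ i ∈ p.2, val f i).card := Finset.card_biUnion_le
      _ ≤ ∑ _p ∈ P, M ^ (n - 1) := Finset.sum_le_sum hevent
      _ = P.card * M ^ (n - 1) := by rw [Finset.sum_const, smul_eq_mul]
      _ < M * M ^ (n - 1) := Nat.mul_lt_mul_of_pos_right hPM (pow_pos hM1 _)
      _ = M ^ n := by rw [← pow_succ', Nat.sub_add_cancel hn1]
  have hex : ∃ f : {x // x ∈ s} → Fin M, f ∉ bad := by
    by_contra hc
    push_neg at hc
    have hall : (Finset.univ : Finset ({x // x ∈ s} → Fin M)) ⊆ bad := fun f _ => hc f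
    have hcard := Finset.card_le_card hall
    rw [Finset.card_univ, Fintype.card_fun, Fintype.card_fin, Fintype.card_coe, hscard] at hcard
    omega
  obtain ⟨f, hf⟩ := hex
  refine ⟨val f, fun i hi => ?_, fun A₁ A₂ hA₁ hA₂ hc₁ hc₂ hAne heq => ?_⟩
  · have his : i ∈ s := hi
    constructor
    · simp only [hval_def, dif_pos his]
      exact Nat.succ_pos _
    · have hub : val f i ≤ M := by
        simp only [hval_def, dif_pos his]
        exact Nat.succ_le_of_lt (f ⟨i, his⟩).is_lt
      calc (val f i : ℝ) ≤ (M:ℝ) := Nat.cast_le.2 hub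
        _ ≤ lam ^ 3 * (n:ℝ) ^ 2 * (2:ℝ) ^ (E * n) := hMle
  · apply hf
    rw [hbad_def, Finset.mem_filter]
    refine ⟨Finset.mem_univ _, (A₁ \ A₂, A₂ \ A₁), ?_, ?_⟩
    · rw [hP_def, Finset.mem_filter, Finset.mem_product]
      dsimp only
      refine ⟨⟨Finset.mem_powerset.2 ((Finset.sdiff_subset).trans hA₁),
        Finset.mem_powerset.2 ((Finset.sdiff_subset).trans hA₂)⟩,
        disjoint_sdiff_sdiff, ?_, ?_, ?_⟩
      · intro e
        have hd : Disjoint (A₁ \ A₂) (A₁ \ A₂) := by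
          nth_rewrite 2 [e]
          exact disjoint_sdiff_sdiff
        have h1 : A₁ \ A₂ = ∅ := (Finset.disjoint_self_iff_empty _).1 hd
        have h2 : A₂ \ A₁ = ∅ := by rw [← e]; exact h1
        exact hAne (le_antisymm (Finset.sdiff_eq_empty_iff_subset.1 h1)
          (Finset.sdiff_eq_empty_iff_subset.1 h2))
      · exact Nat.le_floor ((Nat.cast_le.2 (Finset.card_le_card Finset.sdiff_subset)).trans hc₁)
      · exact Nat.le_floor ((Nat.cast_le.2 (Finset.card_le_card Finset.sdiff_subset)).trans hc₂)
    · dsimp only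
      have e1 := Finset.sum_inter_add_sum_sdiff A₁ A₂ (val f)
      have e2 := Finset.sum_inter_add_sum_sdiff A₂ A₁ (val f)
      rw [Finset.inter_comm A₂ A₁] at e2
      omega
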